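/- Let E be a finite-dimensional real inner product space and f : E → ℝ differentiable and uniformly convex (m-strongly convex for some m > 0). Let iterates q^{n+1} = q^n + β^n p^n be generated with step sizes β^n obtained by exact line search (β^n minimizes β ↦ f(q^n + β p^n) over ℝ), and set s^n = q^{n+1} - q^n. Then there exists a constant c > 0 such that f(q^n) - f(q^n + s^n) ≥ c‖s^n‖² for all n; and if in addition f is bounded below, then ‖s^n‖ → 0 as n → ∞. -/

import Mathlib

open scoped RealInnerProductSpace

/-- For a differentiable, `m`-strongly convex `f` with iterates
generated by exact line search, there is `c > 0` with
`f(q^n) - f(q^n + s^n) ≥ c ‖s^n‖²` for all `n`, where `s^n = q^{n+1} - q^n`;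
and if moreover `f` is bounded below, then `‖s^n‖ → 0`. -/
theorem exact_line_search_decrease
    {E : Type*} [NormedAddCommGroup E] [InnerProductSpace ℝ E] [FiniteDimensional ℝ E]
    (f : E → ℝ) (hf : Differentiable ℝ f)
    (m : ℝ) (hm : 0 < m)
    (hconv : ∀ x y : E,
      f x + ⟪gradient f x, y - x⟫ + (m / 2) * ‖y - x‖ ^ 2 ≤ f y)
    (q p s : ℕ → E) (β : ℕ → ℝ)
    (hq : ∀ n, q (n + 1) = q n + β n • p n)
    (hls : ∀ n, ∀ b : ℝ, f (q n + β n • p n) ≤ f (q n + b • p n))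
    (hs : ∀ n, s n = q (n + 1) - q n) :
    (∃ c : ℝ, 0 < c ∧ ∀ n, c * ‖s n‖ ^ 2 ≤ f (q n) - f (q n + s n)) ∧
      (BddBelow (Set.range f) →
        Filter.Tendsto (fun n => ‖s n‖) Filter.atTop (nhds 0)) := by
  -- s n = β n • p n and q (n+1) = q n + s n
  have hs' : ∀ n, s n = β n • p n := by
    intro n; rw [hs n, hq n]; abel
  have hq1 : ∀ n, q (n + 1) = q n + s n := by
    intro n; rw [hs' n, hq n]
  -- orthogonality from exact line search
  have horth : ∀ n, ⟪gradient f (q (n + 1)), p n⟫ = 0 := by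
    intro n
    set g : ℝ → ℝ := fun b => f (q n + b • p n) with hg
    have hder : ∀ b : ℝ,
        HasDerivAt g (⟪gradient f (q n + b • p n), p n⟫) b := by
      intro b
      have h1 : HasDerivAt (fun t : ℝ => q n + t • p n) (p n) b := by
        simpa using ((hasDerivAt_id b).smul_const (p n)).const_add (q n)
      have h2 := ((hf (q n + b • p n)).hasGradientAt).hasFDerivAt.comp_hasDerivAt b h1
      simp only [InnerProductSpace.toDual_apply_apply] at h2
      exact h2
    have hmin : IsLocalMin g (β n) := by
      apply IsMinOn.isLocalMin (s := Set.univ)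
      · intro b _; exact hls n b
      · exact Filter.univ_mem
    have := hmin.hasDerivAt_eq_zero (hder (β n))
    simpa [← hq n] using this
  have key : ∀ n, m / 2 * ‖s n‖ ^ 2 ≤ f (q n) - f (q n + s n) := by
    intro n
    have h := hconv (q (n + 1)) (q n)
    have hd : q n - q (n + 1) = -(s n) := by rw [hs n]; abel
    have hinner : ⟪gradient f (q (n + 1)), -(s n)⟫ = 0 := by
      rw [hs' n, inner_neg_right, inner_smul_right, horth n]
      ring
    rw [hd, hinner, norm_neg] at h
    rw [← hq1 n]
    linarith
  constructor
  · exact ⟨m / 2, by linarith, key⟩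
  · intro hbdd
    obtain ⟨B, hB⟩ := hbdd
    have hBle : ∀ x, B ≤ f x := fun x => hB ⟨x, rfl⟩
    -- f (q n) is antitone and bounded below, hence converges
    have hanti : Antitone fun n => f (q n) := by
      apply antitone_nat_of_succ_le
      intro n
      have := key n
      have h2 : 0 ≤ m / 2 * ‖s n‖ ^ 2 := by positivity
      rw [← hq1 n] at this
      linarith
    have hbdd2 : BddBelow (Set.range fun n => f (q n)) := ⟨B, by
      rintro x ⟨n, rfl⟩; exact hBle (q n)⟩
    have hconv2 := tendsto_atTop_ciInf hanti hbdd2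
    -- the differences tend to 0
    have hdiff : Filter.Tendsto (fun n => f (q n) - f (q (n + 1)))
        Filter.atTop (nhds 0) := by
      have h2 := hconv2.comp (Filter.tendsto_add_atTop_nat 1)
      have := hconv2.sub h2
      simpa using this
    have hsq : Filter.Tendsto (fun n => ‖s n‖ ^ 2) Filter.atTop (nhds 0) := by
      have hdiff' : Filter.Tendsto (fun n => (2 / m) * (f (q n) - f (q (n + 1))))
          Filter.atTop (nhds 0) := by
        simpa using hdiff.const_mul (2 / m)
      refine squeeze_zero (fun n => by positivity) (fun n => ?_) hdiff'
      have hk := key n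
      rw [← hq1 n] at hk
      have h1 : ‖s n‖ ^ 2 ≤ 2 * (f (q n) - f (q (n + 1))) / m := by
        rw [le_div_iff₀ hm]; nlinarith
      exact h1.trans_eq (by ring)
    have := hsq.sqrt
    simpa [Real.sqrt_sq (norm_nonneg _)] using this
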